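/- Fix an integer n ≥ 2, constants P > 0 and W > 0, an integer k ≥ 3 with μ_k := k/2 − 1, and a time τ such that W e^{−μ_k τ} ≤ 1/2. Let v : [−P,P] → ℝ be C² with |v(σ)| + |v′(σ)| ≤ W e^{−μ_k τ} for all |σ| ≤ P. Define N_loc(σ) := (2(n−1) v′(σ)² − v(σ)²)/(2(1 + v(σ))) and I(σ) := ∫₀^σ v″(s)/(1 + v(s)) ds. Then there exists a constant C₁, depending only on n and P, such that |N_loc(σ) − n v′(σ) I(σ)| ≤ C₁ W² e^{−2μ_k τ} for all |σ| ≤ P. -/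

import Mathlib

open Topology Filter Asymptotics Set MeasureTheory

/-- `μ_k = k/2 - 1`. -/
noncomputable def mu (k : ℕ) : ℝ := (k:ℝ)/2 - 1

/-- auxiliary division bound: if the denominator is at least `1/2`, dividing at most
doubles the absolute value. -/
lemma aux_div_bound (a b : ℝ) (hb : (1/2 : ℝ) ≤ b) : |a / b| ≤ 2 * |a| := by
  rw [abs_div, abs_of_pos (by linarith : (0:ℝ) < b), div_le_iff₀ (by linarith : (0:ℝ) < b)]
  nlinarith [abs_nonneg a]

/-- the pointwise bound `|N_loc - n v_σ I| ≤ C₁ W² e^{-2μ_k τ}` in the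
parabolic region, with `C₁` depending only on `n` and `P`. -/
theorem stmt15 (n : ℕ) (hn : 2 ≤ n) (P : ℝ) (hP : 0 < P) :
    ∃ C₁ : ℝ, ∀ k : ℕ, 3 ≤ k → ∀ W τ : ℝ, 0 < W →
      W * Real.exp (-mu k * τ) ≤ 1/2 →
      ∀ v : ℝ → ℝ,
        ContDiffOn ℝ 2 v (Set.Icc (-P) P) →
        (∀ σ : ℝ, |σ| ≤ P → |v σ| + |deriv v σ| ≤ W * Real.exp (-mu k * τ)) →
        ∀ σ : ℝ, |σ| ≤ P →
          |(2 * ((n:ℝ) - 1) * (deriv v σ)^2 - (v σ)^2) / (2 * (1 + v σ))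
              - (n:ℝ) * deriv v σ * ∫ s in (0:ℝ)..σ, deriv (deriv v) s / (1 + v s)|
            ≤ C₁ * W^2 * Real.exp (-2 * mu k * τ) := by
  refine ⟨6 * n + 2 * n * P, ?_⟩
  intro k hk W τ hW hsmall v hv hb σ hσ
  set ε := W * Real.exp (-mu k * τ) with hεdef
  have hε0 : 0 < ε := mul_pos hW (Real.exp_pos _)
  have hPP : (-P : ℝ) < P := by linarith
  -- basic bounds
  have hvb : ∀ s ∈ Icc (-P) P, |v s| ≤ ε := by
    intro s hs
    have := hb s (abs_le.2 ⟨hs.1, hs.2⟩)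
    have := abs_nonneg (deriv v s); linarith
  have hdb : ∀ s ∈ Icc (-P) P, |deriv v s| ≤ ε := by
    intro s hs
    have := hb s (abs_le.2 ⟨hs.1, hs.2⟩)
    have := abs_nonneg (v s); linarith
  have hden : ∀ s ∈ Icc (-P) P, (1/2 : ℝ) ≤ 1 + v s := by
    intro s hs
    have h1 := hvb s hs
    have h2 := abs_le.1 h1
    linarith [h2.1]
  have hσI : σ ∈ Icc (-P) P := by rcases abs_le.1 hσ with ⟨h1, h2⟩; exact ⟨h1, h2⟩
  have h0I : (0:ℝ) ∈ Icc (-P) P := ⟨by linarith, by linarith⟩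
  have hsubIcc : uIcc (0:ℝ) σ ⊆ Icc (-P) P := uIcc_subset_Icc h0I hσI
  -- the key bound on the integral
  have hI : |∫ s in (0:ℝ)..σ, deriv (deriv v) s / (1 + v s)| ≤ 4 * ε + 4 * P * ε ^ 2 := by
    by_cases hint : IntervalIntegrable (fun s => deriv (deriv v) s / (1 + v s)) volume 0 σ
    · -- setup: derivWithin on the closed interval
      set dW := derivWithin v (Icc (-P) P) with hdWdef
      have hud : UniqueDiffOn ℝ (Icc (-P) P) := uniqueDiffOn_Icc hPP
      have hdWc : ContinuousOn dW (Icc (-P) P) :=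
        hv.continuousOn_derivWithin hud (by norm_num)
      have hdW_eq : ∀ s ∈ Ioo (-P) P, dW s = deriv v s := fun s hs =>
        derivWithin_of_mem_nhds (Icc_mem_nhds hs.1 hs.2)
      have hdWb : ∀ s ∈ Icc (-P) P, |dW s| ≤ ε := by
        intro s hs
        have hcl : s ∈ closure (Ioo (-P) P) := by
          rw [closure_Ioo (ne_of_lt hPP)]; exact hs
        haveI hne : (𝓝[Ioo (-P) P] s).NeBot := mem_closure_iff_nhdsWithin_neBot.1 hcl
        have htend : Tendsto dW (𝓝[Ioo (-P) P] s) (𝓝 (dW s)) :=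
          (hdWc s hs).mono Ioo_subset_Icc_self
        refine le_of_tendsto htend.abs ?_
        filter_upwards [self_mem_nhdsWithin] with x hx
        rw [hdW_eq x hx]; exact hdb x (Ioo_subset_Icc_self hx)
      -- the auxiliary function G and its derivative
      set G : ℝ → ℝ := fun s => dW s / (1 + v s) with hGdef
      set g' : ℝ → ℝ := fun x =>
        deriv (deriv v) x / (1 + v x) - (deriv v x / (1 + v x)) ^ 2 with hg'def
      have hvIoo : ContDiffOn ℝ 2 v (Ioo (-P) P) := hv.mono Ioo_subset_Icc_self
      have hdv : ContDiffOn ℝ 1 (deriv v) (Ioo (-P) P) :=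
        hvIoo.deriv_of_isOpen isOpen_Ioo (by norm_num)
      have hG : ∀ x ∈ Ioo (-P) P, HasDerivAt G (g' x) x := by
        intro x hx
        have hxI : x ∈ Icc (-P) P := Ioo_subset_Icc_self hx
        have hvd : HasDerivAt v (deriv v x) x :=
          ((hv.contDiffAt (Icc_mem_nhds hx.1 hx.2)).differentiableAt
            (by norm_num)).hasDerivAt
        have hv'd : HasDerivAt (deriv v) (deriv (deriv v) x) x :=
          ((hdv.contDiffAt (isOpen_Ioo.mem_nhds hx)).differentiableAt
            (by norm_num)).hasDerivAt
        have hdenx : (1 + v x) ≠ 0 := by have := hden x hxI; intro h; rw [h] at this; linarith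
        have h1 : HasDerivAt (fun s => 1 + v s) (deriv v x) x := by
          exact hvd.const_add 1
        have hdivd : HasDerivAt (fun s => deriv v s / (1 + v s))
            ((deriv (deriv v) x * (1 + v x) - deriv v x * deriv v x) / (1 + v x) ^ 2) x :=
          hv'd.div h1 hdenx
        have heq : G =ᶠ[𝓝 x] fun s => deriv v s / (1 + v s) := by
          filter_upwards [isOpen_Ioo.mem_nhds hx] with y hy
          rw [hGdef]; simp only [hdW_eq y hy]
        have hder := hdivd.congr_of_eventuallyEq heq
        refine hder.congr_deriv ?_
        simp only [hg'def]
        field_simp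
      -- integrability of the square term
      have hq_int : IntervalIntegrable (fun x => (deriv v x / (1 + v x)) ^ 2) volume 0 σ := by
        refine (intervalIntegrable_const (c := 4 * ε ^ 2)).mono_fun ?_ ?_
        · apply AEMeasurable.aestronglyMeasurable
          have hvm : AEMeasurable v (volume.restrict (Set.uIoc (0:ℝ) σ)) :=
            ContinuousOn.aemeasurable
              (hv.continuousOn.mono (Set.Subset.trans uIoc_subset_uIcc hsubIcc))
              measurableSet_uIoc
          exact (((measurable_deriv v).aemeasurable.div
            (aemeasurable_const.add hvm)).pow aemeasurable_const)
        · refine (ae_restrict_iff' measurableSet_uIoc).2 (Eventually.of_forall ?_)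
          intro x hx
          have hxI : x ∈ Icc (-P) P := hsubIcc (uIoc_subset_uIcc hx)
          have h1 : |deriv v x / (1 + v x)| ≤ 2 * ε := by
            calc |deriv v x / (1 + v x)| ≤ 2 * |deriv v x| :=
                  aux_div_bound _ _ (hden x hxI)
              _ ≤ 2 * ε := by linarith [hdb x hxI]
          simp only [Real.norm_eq_abs, abs_pow]
          calc |deriv v x / (1 + v x)| ^ 2 ≤ (2 * ε) ^ 2 :=
                pow_le_pow_left₀ (abs_nonneg _) h1 2
            _ ≤ |4 * ε ^ 2| := by rw [abs_of_nonneg (by positivity)]; nlinarith [sq_nonneg ε]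
      have hint' : IntervalIntegrable g' volume 0 σ := hint.sub hq_int
      -- FTC
      have hcontG : ContinuousOn G (uIcc (0:ℝ) σ) := by
        apply ContinuousOn.div (hdWc.mono hsubIcc)
          ((continuousOn_const.add hv.continuousOn).mono hsubIcc)
        intro x hx
        have := hden x (hsubIcc hx); intro h; simp only [Pi.add_apply] at h; rw [h] at this; linarith
      have key : ∫ x in (0:ℝ)..σ, g' x = G σ - G 0 := by
        apply intervalIntegral.integral_eq_sub_of_hasDeriv_right hcontG ?_ hint'
        intro x hx
        have hxIoo : x ∈ Ioo (-P) P := by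
          constructor
          · exact lt_of_le_of_lt (le_min (by linarith) hσI.1) hx.1
          · exact lt_of_lt_of_le hx.2 (max_le (by linarith) hσI.2)
        exact (hG x hxIoo).hasDerivWithinAt
      have hsplit : (∫ s in (0:ℝ)..σ, deriv (deriv v) s / (1 + v s))
          = (G σ - G 0) + ∫ s in (0:ℝ)..σ, (deriv v s / (1 + v s)) ^ 2 := by
        rw [← key, ← intervalIntegral.integral_add hint' hq_int]
        apply intervalIntegral.integral_congr
        intro x _
        simp only [hg'def]; ring
      -- bounds
      have hGb : ∀ s ∈ Icc (-P) P, |G s| ≤ 2 * ε := by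
        intro s hs
        calc |G s| ≤ 2 * |dW s| := aux_div_bound _ _ (hden s hs)
          _ ≤ 2 * ε := by linarith [hdWb s hs]
      have hqb : |∫ s in (0:ℝ)..σ, (deriv v s / (1 + v s)) ^ 2| ≤ 4 * P * ε ^ 2 := by
        have := intervalIntegral.norm_integral_le_of_norm_le_const
          (C := 4 * ε ^ 2) (f := fun s => (deriv v s / (1 + v s)) ^ 2)
          (a := (0:ℝ)) (b := σ) ?_
        · rw [Real.norm_eq_abs] at this
          calc |∫ s in (0:ℝ)..σ, (deriv v s / (1 + v s)) ^ 2| ≤ 4 * ε ^ 2 * |σ - 0| := this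
            _ ≤ 4 * P * ε ^ 2 := by
                rw [sub_zero]
                have h4 : (0:ℝ) ≤ 4 * ε ^ 2 := by positivity
                nlinarith [hσ, abs_nonneg σ]
        · intro x hx
          have hxI : x ∈ Icc (-P) P := hsubIcc (uIoc_subset_uIcc hx)
          have h1 : |deriv v x / (1 + v x)| ≤ 2 * ε := by
            calc |deriv v x / (1 + v x)| ≤ 2 * |deriv v x| :=
                  aux_div_bound _ _ (hden x hxI)
              _ ≤ 2 * ε := by linarith [hdb x hxI]
          rw [Real.norm_eq_abs, abs_pow]
          calc |deriv v x / (1 + v x)| ^ 2 ≤ (2 * ε) ^ 2 :=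
                pow_le_pow_left₀ (abs_nonneg _) h1 2
            _ = 4 * ε ^ 2 := by ring
      rw [hsplit]
      calc |G σ - G 0 + ∫ s in (0:ℝ)..σ, (deriv v s / (1 + v s)) ^ 2|
          ≤ |G σ| + |G 0| + |∫ s in (0:ℝ)..σ, (deriv v s / (1 + v s)) ^ 2| := by
            have := abs_add_le (G σ - G 0) (∫ s in (0:ℝ)..σ, (deriv v s / (1 + v s)) ^ 2)
            have := abs_sub (G σ) (G 0)
            linarith [abs_sub_abs_le_abs_sub (G σ) (G 0),
              abs_add_le (G σ - G 0) (∫ s in (0:ℝ)..σ, (deriv v s / (1 + v s)) ^ 2),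
              abs_sub (G σ) (G 0)]
        _ ≤ 2 * ε + 2 * ε + 4 * P * ε ^ 2 := by
            linarith [hGb σ hσI, hGb 0 h0I, hqb]
        _ = 4 * ε + 4 * P * ε ^ 2 := by ring
    · rw [intervalIntegral.integral_undef hint]
      rw [abs_zero]
      positivity
  -- final assembly
  have hnum : |2 * ((n:ℝ) - 1) * (deriv v σ)^2 - (v σ)^2| ≤ 2 * n * ε ^ 2 := by
    have h1 : (deriv v σ)^2 ≤ ε^2 := by
      have := pow_le_pow_left₀ (abs_nonneg (deriv v σ)) (hdb σ hσI) 2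
      rwa [sq_abs] at this
    have h2 : (v σ)^2 ≤ ε^2 := by
      have := pow_le_pow_left₀ (abs_nonneg (v σ)) (hvb σ hσI) 2
      rwa [sq_abs] at this
    have hn1 : (1:ℝ) ≤ (n:ℝ) := by exact_mod_cast Nat.one_le_of_lt hn
    rw [abs_le]
    constructor <;> nlinarith [sq_nonneg (deriv v σ), sq_nonneg (v σ), sq_nonneg ε]
  have hA : |(2 * ((n:ℝ) - 1) * (deriv v σ)^2 - (v σ)^2) / (2 * (1 + v σ))| ≤ 2 * n * ε ^ 2 := by
    have hd : (1:ℝ) ≤ 2 * (1 + v σ) := by linarith [hden σ hσI]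
    rw [abs_div, abs_of_pos (by linarith : (0:ℝ) < 2 * (1 + v σ)),
      div_le_iff₀ (by linarith : (0:ℝ) < 2 * (1 + v σ))]
    have hnn : (0:ℝ) ≤ 2 * n * ε ^ 2 := by positivity
    nlinarith [hnum]
  have hB : |(n:ℝ) * deriv v σ * ∫ s in (0:ℝ)..σ, deriv (deriv v) s / (1 + v s)|
      ≤ (n:ℝ) * (4 + 2 * P) * ε ^ 2 := by
    rw [abs_mul, abs_mul, abs_of_nonneg (by positivity : (0:ℝ) ≤ (n:ℝ))]
    have h1 : |deriv v σ| ≤ ε := hdb σ hσI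
    have h2 := hI
    have hεhalf : ε ≤ 1/2 := hsmall
    have hn0 : (0:ℝ) ≤ (n:ℝ) := by positivity
    have habs1 : (0:ℝ) ≤ |deriv v σ| := abs_nonneg _
    have habs2 : (0:ℝ) ≤ |∫ s in (0:ℝ)..σ, deriv (deriv v) s / (1 + v s)| := abs_nonneg _
    calc (n:ℝ) * |deriv v σ| * |∫ s in (0:ℝ)..σ, deriv (deriv v) s / (1 + v s)|
        ≤ (n:ℝ) * ε * (4 * ε + 4 * P * ε ^ 2) := by
          apply mul_le_mul (mul_le_mul_of_nonneg_left h1 hn0) h2 habs2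
          positivity
      _ ≤ (n:ℝ) * (4 + 2 * P) * ε ^ 2 := by
          have key : (n:ℝ) * (4 + 2 * P) * ε ^ 2 - (n:ℝ) * ε * (4 * ε + 4 * P * ε ^ 2)
              = 2 * (n:ℝ) * P * ε ^ 2 * (1 - 2 * ε) := by ring
          have hprod : (0:ℝ) ≤ 2 * (n:ℝ) * P * ε ^ 2 * (1 - 2 * ε) :=
            mul_nonneg (by positivity) (by linarith)
          linarith
  have hexp : ε ^ 2 = W ^ 2 * Real.exp (-2 * mu k * τ) := by
    have h2 : Real.exp (-2 * mu k * τ) = Real.exp (-mu k * τ) ^ 2 := by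
      rw [← Real.exp_nat_mul]
      congr 1
      push_cast
      ring
    rw [hεdef, mul_pow, h2]
  calc |(2 * ((n:ℝ) - 1) * (deriv v σ)^2 - (v σ)^2) / (2 * (1 + v σ))
        - (n:ℝ) * deriv v σ * ∫ s in (0:ℝ)..σ, deriv (deriv v) s / (1 + v s)|
      ≤ |(2 * ((n:ℝ) - 1) * (deriv v σ)^2 - (v σ)^2) / (2 * (1 + v σ))|
        + |(n:ℝ) * deriv v σ * ∫ s in (0:ℝ)..σ, deriv (deriv v) s / (1 + v s)| :=
        abs_sub _ _
    _ ≤ 2 * n * ε ^ 2 + (n:ℝ) * (4 + 2 * P) * ε ^ 2 := by linarith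
    _ = (6 * n + 2 * n * P) * ε ^ 2 := by ring
    _ = (6 * n + 2 * n * P) * W ^ 2 * Real.exp (-2 * mu k * τ) := by
        rw [hexp]; ring
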